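/- Let (η_ℓ)_{ℓ≥0} be a sequence of nonnegative reals with uniform R-linear convergence: there are C_lin ≥ 1 and 0 < q < 1 such that η_{ℓ+k}² ≤ C_lin q^k η_ℓ² for all ℓ, k ≥ 0. Then for every s > 0 there is a constant C(s) > 0 such that ∑_{j=0}^{ℓ−1} η_j^{−1/s} ≤ C(s) η_ℓ^{−1/s} for all ℓ ≥ 1 with η_ℓ > 0. -/
import Mathlib

lemma geom_aux {r : ℝ} (h0 : 0 ≤ r) (h1 : r < 1) (n : ℕ) :
    ∑ j ∈ Finset.range n, r ^ (n - j) ≤ (1 - r)⁻¹ := by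
  have hr1 : r ≠ 1 := ne_of_lt h1
  have h1r : 0 < 1 - r := by linarith
  have key : ∑ j ∈ Finset.range n, r ^ (n - j) ≤ ∑ j ∈ Finset.range n, r ^ j := by
    rw [← Finset.sum_range_reflect (fun j => r ^ (n - j)) n]
    apply Finset.sum_le_sum
    intro i hi
    simp only [Finset.mem_range] at hi
    have hni : n - (n - 1 - i) = i + 1 := by omega
    rw [hni]
    calc r ^ (i + 1) = r ^ i * r := by ring
    _ ≤ r ^ i * 1 := by nlinarith [pow_nonneg h0 i]
    _ = r ^ i := by ring
  refine key.trans ?_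
  rw [geom_sum_eq hr1]
  have heq : (r ^ n - 1) / (r - 1) = (1 - r ^ n) / (1 - r) := by
    rw [div_eq_div_iff (by linarith) (by linarith)]; ring
  rw [heq, div_le_iff₀ h1r, inv_mul_cancel₀ h1r.ne']
  nlinarith [pow_nonneg h0 n]

theorem stmt_7 (η : ℕ → ℝ) (Clin q : ℝ)
    (hη : ∀ ℓ, 0 ≤ η ℓ) (hClin : 1 ≤ Clin) (hq0 : 0 < q) (hq1 : q < 1)
    (hlin : ∀ ℓ k, η (ℓ + k) ^ 2 ≤ Clin * q ^ k * η ℓ ^ 2)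
    (s : ℝ) (hs : 0 < s) :
    ∃ C : ℝ, 0 < C ∧ ∀ ℓ : ℕ, 1 ≤ ℓ → 0 < η ℓ →
      ∑ j ∈ Finset.range ℓ, η j ^ (-(1 / s)) ≤ C * η ℓ ^ (-(1 / s)) := by
  set b : ℝ := 1 / (2 * s) with hb
  have hb0 : 0 < b := by positivity
  have hC0 : 0 < Clin := lt_of_lt_of_le one_pos hClin
  set r : ℝ := q ^ b with hrdef
  have hr0 : 0 < r := Real.rpow_pos_of_pos hq0 b
  have hr1 : r < 1 := Real.rpow_lt_one hq0.le hq1 hb0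
  have hA : 0 < Clin ^ b := Real.rpow_pos_of_pos hC0 b
  refine ⟨Clin ^ b * (1 - r)⁻¹, mul_pos hA (inv_pos.mpr (by linarith)), ?_⟩
  intro ℓ hℓ hηℓ
  have key : ∀ j ∈ Finset.range ℓ,
      η j ^ (-(1 / s)) ≤ Clin ^ b * r ^ (ℓ - j) * η ℓ ^ (-(1 / s)) := by
    intro j hj
    simp only [Finset.mem_range] at hj
    set k := ℓ - j with hk
    have hjk : j + k = ℓ := by omega
    have h2 : η ℓ ^ 2 ≤ Clin * q ^ k * η j ^ 2 := by
      have := hlin j k; rwa [hjk] at this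
    have hηj : 0 < η j := by
      rcases lt_or_eq_of_le (hη j) with h | h
      · exact h
      · exfalso; rw [← h] at h2; nlinarith [pow_pos hηℓ 2]
    have h3 : (η ℓ ^ 2) ^ b ≤ (Clin * q ^ k * η j ^ 2) ^ b :=
      Real.rpow_le_rpow (by positivity) h2 hb0.le
    have twob : (2 : ℝ) * b = 1 / s := by
      rw [hb]; field_simp
    have lhs_eq : (η ℓ ^ 2) ^ b = η ℓ ^ (1 / s) := by
      rw [← Real.rpow_natCast (η ℓ) 2, ← Real.rpow_mul (hη ℓ)]
      norm_num [twob]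
    have rhs_eq : (Clin * q ^ k * η j ^ 2) ^ b
        = Clin ^ b * r ^ k * η j ^ (1 / s) := by
      rw [Real.mul_rpow (by positivity) (by positivity),
          Real.mul_rpow hC0.le (by positivity)]
      congr 1
      · congr 1
        rw [hrdef, ← Real.rpow_natCast q k, ← Real.rpow_natCast (q ^ b) k,
            ← Real.rpow_mul hq0.le, ← Real.rpow_mul hq0.le, mul_comm]
      · rw [← Real.rpow_natCast (η j) 2, ← Real.rpow_mul (hη j)]
        norm_num [twob]
    rw [lhs_eq, rhs_eq] at h3
    have hpj : 0 < η j ^ (1 / s) := Real.rpow_pos_of_pos hηj _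
    have hpl : 0 < η ℓ ^ (1 / s) := Real.rpow_pos_of_pos hηℓ _
    rw [Real.rpow_neg (hη j), Real.rpow_neg (hη ℓ)]
    rw [inv_eq_one_div, div_le_iff₀ hpj]
    calc (1:ℝ) = (η ℓ ^ (1 / s))⁻¹ * η ℓ ^ (1 / s) := (inv_mul_cancel₀ hpl.ne').symm
    _ ≤ (η ℓ ^ (1 / s))⁻¹ * (Clin ^ b * r ^ k * η j ^ (1 / s)) :=
        mul_le_mul_of_nonneg_left h3 (by positivity)
    _ = Clin ^ b * r ^ k * (η ℓ ^ (1 / s))⁻¹ * η j ^ (1 / s) := by ring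
  calc ∑ j ∈ Finset.range ℓ, η j ^ (-(1 / s))
      ≤ ∑ j ∈ Finset.range ℓ, Clin ^ b * r ^ (ℓ - j) * η ℓ ^ (-(1 / s)) :=
        Finset.sum_le_sum key
    _ = Clin ^ b * (∑ j ∈ Finset.range ℓ, r ^ (ℓ - j)) * η ℓ ^ (-(1 / s)) := by
        rw [Finset.mul_sum, Finset.sum_mul]
    _ ≤ Clin ^ b * (1 - r)⁻¹ * η ℓ ^ (-(1 / s)) := by
        have hgeo := geom_aux hr0.le hr1 ℓ
        have hpl : (0:ℝ) ≤ η ℓ ^ (-(1 / s)) := Real.rpow_nonneg (hη ℓ) _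
        gcongr
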